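/- Let a ≥ 2, d ≥ 1, and w ≥ 1 be integers with gcd(a, d) = 1, and let S = ⟨a, a+d, a+2d, …, a+w·d⟩ be the numerical semigroup generated by the arithmetic progression a, a+d, …, a+w·d. Then the Frobenius number of S is F(S) = ⌊(a−2)/w⌋·a + d·(a−1). -/

import Mathlib

private lemma ap_mem_of_le (a d w : ℕ) :
    ∀ m t : ℕ, t ≤ m * w →
      m * a + t * d ∈ AddSubmonoid.closure {x : ℕ | ∃ i ≤ w, x = a + i * d} := by
  intro m
  induction m with
  | zero =>
    intro t ht
    obtain rfl : t = 0 := by omega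
    simpa using zero_mem _
  | succ m ih =>
    intro t ht
    have hexp : (m + 1) * w = m * w + w := by ring
    by_cases h : t ≤ w
    · have h1 : (a + t * d) ∈ AddSubmonoid.closure {x : ℕ | ∃ i ≤ w, x = a + i * d} :=
        AddSubmonoid.subset_closure ⟨t, h, rfl⟩
      have h2 := ih 0 (by simp)
      have e : (m + 1) * a + t * d = (a + t * d) + (m * a + 0 * d) := by ring
      rw [e]; exact add_mem h1 h2
    · obtain ⟨s, rfl⟩ : ∃ s, t = w + s := ⟨t - w, by omega⟩
      have h1 : (a + w * d) ∈ AddSubmonoid.closure {x : ℕ | ∃ i ≤ w, x = a + i * d} :=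
        AddSubmonoid.subset_closure ⟨w, le_refl w, rfl⟩
      have h2 := ih s (by omega)
      have e : (m + 1) * a + (w + s) * d = (a + w * d) + (m * a + s * d) := by ring
      rw [e]; exact add_mem h1 h2

private lemma ap_exists_rep {a d w n : ℕ}
    (hn : n ∈ AddSubmonoid.closure {x : ℕ | ∃ i ≤ w, x = a + i * d}) :
    ∃ m t, n = m * a + t * d ∧ t ≤ m * w := by
  induction hn using AddSubmonoid.closure_induction with
  | mem x hx => obtain ⟨i, hi, rfl⟩ := hx; exact ⟨1, i, by ring, by omega⟩
  | zero => exact ⟨0, 0, by simp, by simp⟩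
  | add x y _ _ hx hy =>
    obtain ⟨m1, t1, rfl, h1⟩ := hx
    obtain ⟨m2, t2, rfl, h2⟩ := hy
    exact ⟨m1 + m2, t1 + t2, by ring, by nlinarith⟩

/-- Frobenius number of an arithmetic progression: for `a ≥ 2`, `d ≥ 1`,
`w ≥ 1` with `gcd(a, d) = 1`, the largest natural number not in
`⟨a, a+d, …, a+w*d⟩` is `⌊(a-2)/w⌋ * a + d * (a-1)`. -/
theorem frobenius_arithmetic_progression (a d w : ℕ) (ha : 2 ≤ a)
    (hd : 1 ≤ d) (hw : 1 ≤ w) (had : Nat.gcd a d = 1) :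
    IsGreatest
      {n : ℕ | n ∉ AddSubmonoid.closure {x : ℕ | ∃ i ≤ w, x = a + i * d}}
      ((a - 2) / w * a + d * (a - 1)) := by
  haveI : NeZero a := ⟨by omega⟩
  have hdu : IsUnit (d : ZMod a) := by
    rw [ZMod.isUnit_iff_coprime]
    exact Nat.Coprime.symm had
  set F := (a - 2) / w * a + d * (a - 1) with hF
  constructor
  · -- F ∉ closure
    intro hFmem
    obtain ⟨m, t, hrep, hle⟩ := ap_exists_rep hFmem
    have h1 : ((F : ℕ) : ZMod a) = (t : ZMod a) * d := by
      rw [hrep]; push_cast; simp [ZMod.natCast_self]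
    have h2 : ((F : ℕ) : ZMod a) = ((a - 1 : ℕ) : ZMod a) * d := by
      rw [hF]; push_cast; simp [ZMod.natCast_self]; ring
    have ht : (t : ZMod a) = ((a - 1 : ℕ) : ZMod a) :=
      hdu.mul_right_cancel (h1 ▸ h2 ▸ rfl)
    have hmod : t % a = (a - 1) % a :=
      (ZMod.natCast_eq_natCast_iff _ _ _).mp ht
    have hmod' : (a - 1) % a = a - 1 := Nat.mod_eq_of_lt (by omega)
    have hdm := Nat.div_add_mod t a
    set k := t / a with hk
    have htk : t = a * k + (a - 1) := by omega
    have e1 : m * a + t * d = (m + k * d) * a + (a - 1) * d := by rw [htk]; ring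
    have e2 : F = (a - 2) / w * a + (a - 1) * d := by rw [hF]; ring
    have e3 : (a - 2) / w * a = (m + k * d) * a := by omega
    have e4 : (a - 2) / w = m + k * d :=
      Nat.eq_of_mul_eq_mul_right (by omega) e3
    have h5 : m * w ≤ (a - 2) / w * w := Nat.mul_le_mul_right _ (by omega)
    have h6 : (a - 2) / w * w ≤ a - 2 := Nat.div_mul_le_self _ _
    omega
  · -- F is an upper bound
    intro n hn
    by_contra hgt
    push_neg at hgt
    apply hn
    set t := ((n : ZMod a) * (d : ZMod a)⁻¹).val with htdef
    have htlt : t < a := ZMod.val_lt _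
    have htd : ((t * d : ℕ) : ZMod a) = (n : ZMod a) := by
      push_cast
      rw [htdef, ZMod.natCast_val, ZMod.cast_id, mul_assoc,
        ZMod.inv_mul_of_unit _ hdu, mul_one]
    have hmodeq : t * d ≡ n [MOD a] := (ZMod.natCast_eq_natCast_iff _ _ _).mp htd
    have htdle : t * d ≤ F := by
      have hc : t * d ≤ d * (a - 1) := by
        rw [mul_comm d]; exact Nat.mul_le_mul_right d (by omega)
      omega
    have hdvd : a ∣ n - t * d := (Nat.modEq_iff_dvd' (by omega)).mp hmodeq
    obtain ⟨m, hm⟩ := hdvd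
    have hc2 : a * m = m * a := mul_comm a m
    have hn_eq : n = m * a + t * d := by omega
    rw [hn_eq]
    apply ap_mem_of_le
    by_cases ht0 : t = 0
    · simp [ht0]
    · set q := (t - 1) / w with hq
      have hqle : q ≤ (a - 2) / w := Nat.div_le_div_right (by omega)
      have hqa : (q + 1) * a = q * a + a := by ring
      have hFa : ((a - 2) / w + 1) * a = (a - 2) / w * a + a := by ring
      have hs1 : (q + 1) * a ≤ ((a - 2) / w + 1) * a :=
        Nat.mul_le_mul_right _ (by omega)
      have hs2 : t * d ≤ (a - 1) * d := Nat.mul_le_mul_right _ (by omega)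
      have hFd : (a - 1) * d = d * (a - 1) := mul_comm _ _
      -- hence (q+1)*a + t*d ≤ F + a, so m ≥ q + 1
      have hm1 : q + 1 ≤ m := by
        by_contra hmq
        push_neg at hmq
        have hma : m * a ≤ q * a := Nat.mul_le_mul_right _ (by omega)
        omega
      have hqw := Nat.div_add_mod (t - 1) w
      have hr : (t - 1) % w < w := Nat.mod_lt _ (by omega)
      have hmw : (q + 1) * w ≤ m * w := Nat.mul_le_mul_right _ hm1
      have hqe : (q + 1) * w = w * q + w := by ring
      have hqq : w * ((t - 1) / w) = w * q := by rw [hq]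
      omega
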